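/- Let X be a nonempty finite set, c : X×X → [0,∞) with c(x,x) = 0 for all x, p̂ ∈ Δ^X, f : X → ℝ, and θ ≥ 0. Define W_c(p, p̂) as the minimum over couplings γ of (p, p̂) of Σ_{x,y} c(x,y)·γ(x,y). Then the supremum over p ∈ Δ^X with W_c(p, p̂) ≤ θ of Σ_x p(x)·f(x) equals the minimum over λ ≥ 0 of ( λθ + Σ_x p̂(x)·max_{y∈X} ( f(y) − λ·c(y,x) ) ). -/

import Mathlib

open Pointwise


/-- **Strong duality for worst-case expectations over Wasserstein balls (finite spaces).**
For a cost `c ≥ 0` with `c(x,x) = 0`, nominal `p̂ ∈ Δ^X`, `f : X → ℝ` and radius `θ ≥ 0`,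
`sup { Σ_x p(x) f(x) : p ∈ Δ^X, W_c(p,p̂) ≤ θ }
  = min_{λ ≥ 0} ( λθ + Σ_x p̂(x)·max_y ( f(y) − λ·c(y,x) ) )`,
where `W_c(p,p̂)` is the minimal coupling cost between `p` and `p̂`. -/
theorem wasserstein_ball_duality_finite
    (X : Type*) [Fintype X] [Nonempty X]
    (c : X → X → ℝ) (hc0 : ∀ x y, 0 ≤ c x y) (hcd : ∀ x, c x x = 0)
    (phat : X → ℝ) (hphat : phat ∈ stdSimplex ℝ X)
    (f : X → ℝ) (θ : ℝ) (hθ : 0 ≤ θ) :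
    let W : (X → ℝ) → ℝ := fun p =>
      sInf {t : ℝ | ∃ γ : X → X → ℝ,
        (∀ x y, 0 ≤ γ x y) ∧
        (∀ x, ∑ y, γ x y = p x) ∧
        (∀ y, ∑ x, γ x y = phat y) ∧
        t = ∑ x, ∑ y, c x y * γ x y}
    IsLeast {y : ℝ | ∃ lam : ℝ, 0 ≤ lam ∧
        y = lam * θ + ∑ x, phat x *
              Finset.univ.sup' Finset.univ_nonempty (fun z => f z - lam * c z x)}
      (sSup {e : ℝ | ∃ p ∈ stdSimplex ℝ X, W p ≤ θ ∧ e = ∑ x, p x * f x}) := by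
  classical
  intro W
  obtain ⟨hpnn, hpsum⟩ := hphat
  set g : ℝ → X → ℝ := fun lam x =>
    Finset.univ.sup' Finset.univ_nonempty (fun z => f z - lam * c z x) with hgdef
  set D : ℝ → ℝ := fun lam => lam * θ + ∑ x, phat x * g lam x with hDdef
  set S : Set ℝ := {e : ℝ | ∃ p ∈ stdSimplex ℝ X, W p ≤ θ ∧ e = ∑ x, p x * f x} with hSdef
  show IsLeast {y : ℝ | ∃ lam : ℝ, 0 ≤ lam ∧ y = D lam} (sSup S)
  -- basic facts about g
  have hg_le : ∀ (lam : ℝ) (x z : X), f z - lam * c z x ≤ g lam x :=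
    fun lam x z => Finset.le_sup' (fun z => f z - lam * c z x) (Finset.mem_univ z)
  have hg_f : ∀ (lam : ℝ) (x : X), f x ≤ g lam x := by
    intro lam x
    have := hg_le lam x x
    rw [hcd x] at this; linarith
  -- pointwise weak duality over couplings with column marginals phat
  have keyA : ∀ lam : ℝ, 0 ≤ lam → ∀ γ : X → X → ℝ, (∀ x y, 0 ≤ γ x y) →
      (∀ y, ∑ x, γ x y = phat y) →
      ∑ x, ∑ y, γ x y * f x ≤ lam * (∑ x, ∑ y, c x y * γ x y) + ∑ y, phat y * g lam y := by
    intro lam hlam γ hγnn hγcol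
    have h1 : ∀ x y, γ x y * f x ≤ lam * (c x y * γ x y) + γ x y * g lam y := by
      intro x y
      have h2 : f x ≤ lam * c x y + g lam y := by
        have := hg_le lam y x; linarith
      calc γ x y * f x ≤ γ x y * (lam * c x y + g lam y) :=
            mul_le_mul_of_nonneg_left h2 (hγnn x y)
        _ = lam * (c x y * γ x y) + γ x y * g lam y := by ring
    calc ∑ x, ∑ y, γ x y * f x
        ≤ ∑ x, ∑ y, (lam * (c x y * γ x y) + γ x y * g lam y) :=
          Finset.sum_le_sum fun x _ => Finset.sum_le_sum fun y _ => h1 x y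
      _ = (∑ x, ∑ y, lam * (c x y * γ x y)) + ∑ x, ∑ y, γ x y * g lam y := by
          simp [Finset.sum_add_distrib]
      _ = lam * (∑ x, ∑ y, c x y * γ x y) + ∑ y, phat y * g lam y := by
          congr 1
          · rw [Finset.mul_sum]
            exact Finset.sum_congr rfl fun x _ => (Finset.mul_sum _ _ _).symm
          · rw [Finset.sum_comm]
            exact Finset.sum_congr rfl fun y _ => by rw [← Finset.sum_mul, hγcol y]
  -- the cost set for p
  have hWdef : ∀ p : X → ℝ, W p = sInf {t : ℝ | ∃ γ : X → X → ℝ,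
        (∀ x y, 0 ≤ γ x y) ∧
        (∀ x, ∑ y, γ x y = p x) ∧
        (∀ y, ∑ x, γ x y = phat y) ∧
        t = ∑ x, ∑ y, c x y * γ x y} := fun p => rfl
  have hTbdd : ∀ p : X → ℝ, BddBelow {t : ℝ | ∃ γ : X → X → ℝ,
        (∀ x y, 0 ≤ γ x y) ∧
        (∀ x, ∑ y, γ x y = p x) ∧
        (∀ y, ∑ x, γ x y = phat y) ∧
        t = ∑ x, ∑ y, c x y * γ x y} := by
    intro p
    refine ⟨0, fun t ht => ?_⟩
    obtain ⟨γ, hnn, -, -, rfl⟩ := ht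
    exact Finset.sum_nonneg fun x _ => Finset.sum_nonneg fun y _ =>
      mul_nonneg (hc0 x y) (hnn x y)
  -- product coupling: cost set nonempty for p in the simplex
  have hTne : ∀ p ∈ stdSimplex ℝ X, ∃ t, ∃ γ : X → X → ℝ,
        (∀ x y, 0 ≤ γ x y) ∧
        (∀ x, ∑ y, γ x y = p x) ∧
        (∀ y, ∑ x, γ x y = phat y) ∧
        t = ∑ x, ∑ y, c x y * γ x y := by
    intro p hp
    refine ⟨_, fun x y => p x * phat y, fun x y => mul_nonneg (hp.1 x) (hpnn y),
      fun x => ?_, fun y => ?_, rfl⟩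
    · rw [← Finset.mul_sum, hpsum, mul_one]
    · rw [← Finset.sum_mul, hp.2, one_mul]
  -- weak duality
  have hub : ∀ lam : ℝ, 0 ≤ lam → ∀ e ∈ S, e ≤ D lam := by
    intro lam hlam e he
    obtain ⟨p, hp, hWp, rfl⟩ := he
    set T : Set ℝ := {t : ℝ | ∃ γ : X → X → ℝ,
        (∀ x y, 0 ≤ γ x y) ∧
        (∀ x, ∑ y, γ x y = p x) ∧
        (∀ y, ∑ x, γ x y = phat y) ∧
        t = ∑ x, ∑ y, c x y * γ x y} with hTdef
    have hWT : W p = sInf T := rfl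
    have hTne' : T.Nonempty := hTne p hp
    have hkey : ∀ t ∈ T, ∑ x, p x * f x ≤ lam * t + ∑ y, phat y * g lam y := by
      intro t ht
      obtain ⟨γ, hnn, hrow, hcol, rfl⟩ := ht
      have := keyA lam hlam γ hnn hcol
      have hval : ∑ x, ∑ y, γ x y * f x = ∑ x, p x * f x :=
        Finset.sum_congr rfl fun x _ => by rw [← Finset.sum_mul, hrow x]
      linarith [this, hval.symm.le, hval.le]
    rcases eq_or_lt_of_le hlam with h0 | hpos
    · obtain ⟨t, ht⟩ := hTne'
      have h := hkey t ht
      rw [← h0] at h ⊢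
      have hz : (0:ℝ) * t = 0 := zero_mul t
      simp only [hDdef]
      linarith
    · have hlb : ∀ t ∈ T, (∑ x, p x * f x - ∑ y, phat y * g lam y) / lam ≤ t := by
        intro t ht
        have := hkey t ht
        rw [div_le_iff₀ hpos]
        linarith
      have hinf : (∑ x, p x * f x - ∑ y, phat y * g lam y) / lam ≤ sInf T :=
        le_csInf hTne' hlb
      rw [← hWT] at hinf
      have h3 : (∑ x, p x * f x - ∑ y, phat y * g lam y) / lam ≤ θ := le_trans hinf hWp
      rw [div_le_iff₀ hpos] at h3
      simp only [hDdef]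
      nlinarith
  -- diagonal coupling shows phat itself feasible
  have hSne : S.Nonempty := by
    refine ⟨∑ x, phat x * f x, phat, ⟨hpnn, hpsum⟩, ?_, rfl⟩
    have h0T : (0 : ℝ) ∈ {t : ℝ | ∃ γ : X → X → ℝ,
        (∀ x y, 0 ≤ γ x y) ∧
        (∀ x, ∑ y, γ x y = phat x) ∧
        (∀ y, ∑ x, γ x y = phat y) ∧
        t = ∑ x, ∑ y, c x y * γ x y} := by
      refine ⟨fun x y => if x = y then phat x else 0, ?_, ?_, ?_, ?_⟩
      · intro x y; dsimp only; split <;> simp [hpnn]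
      · intro x; simp [Finset.sum_ite_eq]
      · intro y; simp [Finset.sum_ite_eq']
      · symm
        simp [mul_ite, mul_zero, Finset.sum_ite_eq, hcd]
    calc W phat ≤ 0 := csInf_le (hTbdd phat) h0T
      _ ≤ θ := hθ
  have hbddS : BddAbove S := ⟨D 0, fun e he => hub 0 le_rfl e he⟩
  set V : ℝ := sSup S with hVdef
  -- the threshold beyond which g is constant
  have _inst : Nonempty (X × X) := instNonemptyProd
  set Λ : ℝ := max 0 (Finset.univ.sup' Finset.univ_nonempty
      (fun q : X × X => if c q.1 q.2 = 0 then 0 else (f q.1 - f q.2) / c q.1 q.2)) with hΛdef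
  have hΛ0 : 0 ≤ Λ := le_max_left _ _
  have hgconst : ∀ lam : ℝ, Λ ≤ lam → ∀ x, g lam x = g Λ x := by
    intro lam hlam x
    apply le_antisymm
    · apply Finset.sup'_le
      intro z _
      have : f z - lam * c z x ≤ f z - Λ * c z x := by
        have := mul_le_mul_of_nonneg_right hlam (hc0 z x)
        linarith
      exact le_trans this (hg_le Λ x z)
    · apply Finset.sup'_le
      intro z _
      by_cases hz : c z x = 0
      · have := hg_le lam x z
        rw [hz] at this ⊢
        simpa using this
      · have hczx : 0 < c z x := lt_of_le_of_ne (hc0 z x) (Ne.symm hz)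
        have h1 : (f z - f x) / c z x ≤ Λ := by
          refine le_trans ?_ (le_max_right _ _)
          have := Finset.le_sup' (f := fun q : X × X =>
            if c q.1 q.2 = 0 then 0 else (f q.1 - f q.2) / c q.1 q.2)
            (Finset.mem_univ (z, x))
          simpa only [hz, ↓reduceIte] using this
        have h2 : f z - Λ * c z x ≤ f x := by
          rw [div_le_iff₀ hczx] at h1
          nlinarith
        exact le_trans h2 (hg_f lam x)
  have hDmono : ∀ lam : ℝ, Λ ≤ lam → D Λ ≤ D lam := by
    intro lam hlam
    have hsum : ∑ x, phat x * g lam x = ∑ x, phat x * g Λ x :=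
      Finset.sum_congr rfl fun x _ => by rw [hgconst lam hlam x]
    have := mul_le_mul_of_nonneg_right hlam hθ
    simp only [hDdef]
    rw [hsum]
    linarith
  -- continuity of D and attainment of the dual minimum on [0, Λ]
  have hgc : ∀ x, Continuous fun lam => g lam x := by
    intro x
    rw [continuous_iff_continuousAt]
    intro t
    exact Filter.Tendsto.finset_sup'_nhds_apply Finset.univ_nonempty
      (fun i _ => ((continuous_const.sub (continuous_id.mul continuous_const)).tendsto t))
  have hDc : Continuous D := by
    apply Continuous.add (continuous_id.mul continuous_const)
    exact continuous_finset_sum _ fun x _ => continuous_const.mul (hgc x)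
  obtain ⟨lam0, hlam0mem, hlam0min⟩ :=
    (isCompact_Icc (a := (0:ℝ)) (b := Λ)).exists_isMinOn ⟨0, by simp [hΛ0]⟩ hDc.continuousOn
  obtain ⟨hlam0nn, hlam0le⟩ := Set.mem_Icc.mp hlam0mem
  have hminall : ∀ lam : ℝ, 0 ≤ lam → D lam0 ≤ D lam := by
    intro lam hlam
    rcases le_or_gt lam Λ with h | h
    · exact hlam0min (Set.mem_Icc.mpr ⟨hlam, h⟩)
    · exact le_trans (hlam0min (Set.mem_Icc.mpr ⟨hΛ0, le_rfl⟩)) (hDmono lam h.le)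
  -- strong duality via separation
  have hstrong : D lam0 ≤ V := by
    refine le_of_forall_pos_le_add fun ε hε => ?_
    set Γ : Set (X → X → ℝ) := {γ | (∀ x y, 0 ≤ γ x y) ∧ ∀ y, ∑ x, γ x y = phat y} with hΓdef
    set Φ : (X → X → ℝ) → ℝ × ℝ :=
      fun γ => (∑ x, ∑ y, c x y * γ x y, ∑ x, ∑ y, γ x y * f x) with hΦdef
    set Q : Set (ℝ × ℝ) := {q | 0 ≤ q.1 ∧ q.2 ≤ 0} with hQdef
    set A : Set (ℝ × ℝ) := Φ '' Γ + Q with hAdef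
    have hmemA : ∀ q : ℝ × ℝ, q ∈ A ↔ ∃ γ ∈ Γ, (Φ γ).1 ≤ q.1 ∧ q.2 ≤ (Φ γ).2 := by
      intro q
      constructor
      · intro hq
        obtain ⟨a, ha, b, hb, hab⟩ := Set.mem_add.mp hq
        obtain ⟨γ, hγ, rfl⟩ := ha
        obtain ⟨hb1, hb2⟩ := hb
        refine ⟨γ, hγ, ?_, ?_⟩
        · rw [← hab, Prod.fst_add]; linarith
        · rw [← hab, Prod.snd_add]; linarith
      · rintro ⟨γ, hγ, h1, h2⟩
        refine Set.mem_add.mpr ⟨Φ γ, ⟨γ, hγ, rfl⟩, q - Φ γ, ⟨?_, ?_⟩, add_sub_cancel _ _⟩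
        · simpa [sub_nonneg] using h1
        · simpa [sub_nonpos] using h2
    -- Γ is compact
    have hΓclosed : IsClosed Γ := by
      have : Γ = (⋂ x, ⋂ y, {γ : X → X → ℝ | 0 ≤ γ x y}) ∩
          ⋂ y, {γ : X → X → ℝ | ∑ x, γ x y = phat y} := by
        ext γ; simp only [hΓdef, Set.mem_setOf_eq, Set.mem_inter_iff, Set.mem_iInter]
      rw [this]
      refine IsClosed.inter (isClosed_iInter fun x => isClosed_iInter fun y => ?_)
        (isClosed_iInter fun y => ?_)
      · exact isClosed_le continuous_const ((continuous_apply y).comp (continuous_apply x))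
      · exact isClosed_eq (continuous_finset_sum _ fun x _ =>
          (continuous_apply y).comp (continuous_apply x)) continuous_const
    have hΓcpt : IsCompact Γ := by
      refine IsCompact.of_isClosed_subset
        (isCompact_Icc (a := fun _ _ => (0:ℝ)) (b := fun _ _ => (1:ℝ))) hΓclosed ?_
      rintro γ ⟨hnn, hcol⟩
      constructor
      · intro x; intro y; exact hnn x y
      · intro x; intro y
        have h1 : γ x y ≤ ∑ x', γ x' y :=
          Finset.single_le_sum (f := fun x' => γ x' y) (fun i _ => hnn i y) (Finset.mem_univ x)
        have h2 : phat y ≤ ∑ y', phat y' :=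
          Finset.single_le_sum (fun i _ => hpnn i) (Finset.mem_univ y)
        rw [hcol y] at h1
        rw [hpsum] at h2
        exact le_trans h1 h2
    have hΦcont : Continuous Φ := by
      refine Continuous.prodMk ?_ ?_
      · exact continuous_finset_sum _ fun x _ => continuous_finset_sum _ fun y _ =>
          continuous_const.mul ((continuous_apply y).comp (continuous_apply x))
      · exact continuous_finset_sum _ fun x _ => continuous_finset_sum _ fun y _ =>
          (((continuous_apply y).comp (continuous_apply x) :
            Continuous fun γ : X → X → ℝ => γ x y)).mul continuous_const
    have hQclosed : IsClosed Q := by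
      rw [hQdef, Set.setOf_and]
      exact (isClosed_le continuous_const continuous_fst).inter
        (isClosed_le continuous_snd continuous_const)
    have hAclosed : IsClosed A := by
      rw [hAdef]
      exact IsClosed.add_left_of_isCompact hQclosed (hΓcpt.image hΦcont)
    -- A is convex
    have hAconv : Convex ℝ A := by
      rintro q1 hq1 q2 hq2 a b ha hb hab
      obtain ⟨γ1, ⟨h1nn, h1col⟩, h11, h12⟩ := (hmemA q1).1 hq1
      obtain ⟨γ2, ⟨h2nn, h2col⟩, h21, h22⟩ := (hmemA q2).1 hq2
      refine (hmemA _).2 ⟨fun x y => a * γ1 x y + b * γ2 x y, ⟨?_, ?_⟩, ?_, ?_⟩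
      · intro x y
        exact add_nonneg (mul_nonneg ha (h1nn x y)) (mul_nonneg hb (h2nn x y))
      · intro y
        rw [Finset.sum_add_distrib, ← Finset.mul_sum, ← Finset.mul_sum, h1col y, h2col y]
        linear_combination phat y * hab
      · have e : (Φ fun x y => a * γ1 x y + b * γ2 x y).1 =
            a * (Φ γ1).1 + b * (Φ γ2).1 := by
          simp only [hΦdef]
          rw [Finset.mul_sum, Finset.mul_sum, ← Finset.sum_add_distrib]
          refine Finset.sum_congr rfl fun x _ => ?_
          rw [Finset.mul_sum, Finset.mul_sum, ← Finset.sum_add_distrib]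
          exact Finset.sum_congr rfl fun y _ => by ring
        rw [e]
        have : (a • q1 + b • q2).1 = a * q1.1 + b * q2.1 := by
          simp [Prod.fst_add, smul_eq_mul]
        rw [this]
        exact add_le_add (mul_le_mul_of_nonneg_left h11 ha) (mul_le_mul_of_nonneg_left h21 hb)
      · have e : (Φ fun x y => a * γ1 x y + b * γ2 x y).2 =
            a * (Φ γ1).2 + b * (Φ γ2).2 := by
          simp only [hΦdef]
          rw [Finset.mul_sum, Finset.mul_sum, ← Finset.sum_add_distrib]
          refine Finset.sum_congr rfl fun x _ => ?_
          rw [Finset.mul_sum, Finset.mul_sum, ← Finset.sum_add_distrib]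
          exact Finset.sum_congr rfl fun y _ => by ring
        rw [e]
        have : (a • q1 + b • q2).2 = a * q1.2 + b * q2.2 := by
          simp [Prod.snd_add, smul_eq_mul]
        rw [this]
        exact add_le_add (mul_le_mul_of_nonneg_left h12 ha) (mul_le_mul_of_nonneg_left h22 hb)
    -- the point (θ, V + ε) is not in A
    have hnot : (θ, V + ε) ∉ A := by
      rw [hmemA]
      rintro ⟨γ, ⟨hnn, hcol⟩, h1, h2⟩
      set p : X → ℝ := fun x => ∑ y, γ x y with hpdef
      have hpmem : p ∈ stdSimplex ℝ X := by
        refine ⟨fun x => Finset.sum_nonneg fun y _ => hnn x y, ?_⟩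
        show ∑ x, ∑ y, γ x y = 1
        rw [Finset.sum_comm]
        rw [Finset.sum_congr rfl fun y _ => hcol y]
        exact hpsum
      have hWp : W p ≤ θ := by
        refine le_trans (csInf_le (hTbdd p) ⟨γ, hnn, fun x => rfl, hcol, rfl⟩) ?_
        exact h1
      have hin : (∑ x, p x * f x) ∈ S := ⟨p, hpmem, hWp, rfl⟩
      have hle := le_csSup hbddS hin
      have hval : (Φ γ).2 = ∑ x, p x * f x := by
        simp only [hΦdef]
        exact Finset.sum_congr rfl fun x _ => by rw [← Finset.sum_mul]
      rw [hval] at h2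
      simp only at h2
      rw [← hVdef] at hle
      linarith
    -- separation
    obtain ⟨φ, u, hA_lt, hu_lt⟩ := geometric_hahn_banach_closed_point hAconv hAclosed hnot
    set α : ℝ := φ (1, 0) with hαdef
    set β : ℝ := φ (0, 1) with hβdef
    have hφ : ∀ t s : ℝ, φ (t, s) = t * α + s * β := by
      intro t s
      have e : (t, s) = t • ((1:ℝ), (0:ℝ)) + s • ((0:ℝ), (1:ℝ)) := by
        simp [Prod.ext_iff]
      rw [e, map_add, map_smul, map_smul, smul_eq_mul, smul_eq_mul, hαdef, hβdef]
    set v0 : ℝ := ∑ x, phat x * f x with hv0def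
    have hdiagA : ∀ n m : ℝ, 0 ≤ n → 0 ≤ m → (n, v0 - m) ∈ A := by
      intro n m hn hm
      rw [hmemA]
      refine ⟨fun x y => if x = y then phat x else 0, ⟨fun x y => ?_, fun y => ?_⟩, ?_, ?_⟩
      · dsimp only; split <;> simp [hpnn]
      · simp [Finset.sum_ite_eq']
      · have e : (Φ fun x y => if x = y then phat x else 0).1 = 0 := by
          simp [hΦdef, mul_ite, mul_zero, Finset.sum_ite_eq, hcd]
        rw [e]; exact hn
      · have e : (Φ fun x y => if x = y then phat x else 0).2 = v0 := by
          simp [hΦdef, ite_mul, zero_mul, Finset.sum_ite_eq, hv0def]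
        rw [e]; show v0 - m ≤ v0; linarith
    have hαle : α ≤ 0 := by
      by_contra h
      push_neg at h
      have h1 := hA_lt _ (hdiagA (max 0 ((u - v0 * β) / α)) 0 (le_max_left _ _) le_rfl)
      rw [sub_zero, hφ] at h1
      have h2 : (u - v0 * β) / α ≤ max 0 ((u - v0 * β) / α) := le_max_right _ _
      rw [div_le_iff₀ h] at h2
      linarith
    have hβge : 0 ≤ β := by
      by_contra h
      push_neg at h
      set m : ℝ := max 0 ((u - v0 * β) / (-β)) with hmdef
      have h1 := hA_lt _ (hdiagA 0 m le_rfl (le_max_left _ _))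
      rw [hφ] at h1
      have h2 : (u - v0 * β) / (-β) ≤ m := le_max_right _ _
      rw [div_le_iff₀ (by linarith : (0:ℝ) < -β)] at h2
      have e1 : (v0 - m) * β = v0 * β - m * β := by ring
      have e2 : m * -β = -(m * β) := by ring
      rw [e1] at h1
      linarith
    have hβpos : 0 < β := by
      rcases lt_or_eq_of_le hβge with h | h
      · exact h
      · exfalso
        have h1 := hA_lt _ (hdiagA 0 0 le_rfl le_rfl)
        rw [sub_zero, hφ] at h1
        rw [hφ] at hu_lt
        rw [← h] at h1 hu_lt
        have h3 : θ * α ≤ 0 := mul_nonpos_iff.mpr (Or.inl ⟨hθ, hαle⟩)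
        simp only [mul_zero, add_zero, zero_mul, zero_add] at h1 hu_lt
        linarith
    set lam : ℝ := -α / β with hlamdef
    have hlamnn : 0 ≤ lam := div_nonneg (neg_nonneg.2 hαle) hβpos.le
    have hlamβ : lam * β = -α := by
      rw [hlamdef]
      field_simp
    have hz : ∀ y : X, ∃ i : X, g lam y = f i - lam * c i y := by
      intro y
      obtain ⟨i, -, hi⟩ :=
        Finset.exists_mem_eq_sup' Finset.univ_nonempty (fun z => f z - lam * c z y)
      exact ⟨i, hi⟩
    choose z hzd using hz
    set γ : X → X → ℝ := fun x y => if x = z y then phat y else 0 with hγdef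
    have hγΓ : γ ∈ Γ := by
      refine ⟨fun x y => ?_, fun y => ?_⟩
      · simp only [hγdef]; split <;> simp [hpnn]
      · simp [hγdef, Finset.sum_ite_eq']
    have hAγ : Φ γ ∈ A := (hmemA _).2 ⟨γ, hγΓ, le_rfl, le_rfl⟩
    have hcost : (Φ γ).1 = ∑ y, c (z y) y * phat y := by
      simp only [hΦdef]
      rw [Finset.sum_comm]
      refine Finset.sum_congr rfl fun y _ => ?_
      simp [hγdef, mul_ite, mul_zero, Finset.sum_ite_eq']
    have hvalγ : (Φ γ).2 = ∑ y, phat y * f (z y) := by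
      simp only [hΦdef]
      rw [Finset.sum_comm]
      refine Finset.sum_congr rfl fun y _ => ?_
      simp [hγdef, ite_mul, zero_mul, Finset.sum_ite_eq']
    have hgsum : ∑ y, phat y * g lam y = (Φ γ).2 - lam * (Φ γ).1 := by
      rw [hvalγ, hcost, Finset.mul_sum, ← Finset.sum_sub_distrib]
      refine Finset.sum_congr rfl fun y _ => ?_
      rw [hzd y]; ring
    have h1 := hA_lt _ hAγ
    have hφΦ := hφ (Φ γ).1 (Φ γ).2
    rw [Prod.mk.eta] at hφΦ
    rw [hφΦ] at h1
    rw [hφ] at hu_lt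
    have hα : α = -(lam * β) := by rw [hlamβ]; ring
    rw [hα] at h1 hu_lt
    have e1 : ((Φ γ).2 - lam * (Φ γ).1) * β =
        (Φ γ).1 * -(lam * β) + (Φ γ).2 * β := by ring
    have e2 : (V + ε - lam * θ) * β = θ * -(lam * β) + (V + ε) * β := by ring
    have h3 : ((Φ γ).2 - lam * (Φ γ).1) * β < (V + ε - lam * θ) * β := by
      rw [e1, e2]; linarith
    have h4 : (Φ γ).2 - lam * (Φ γ).1 < V + ε - lam * θ :=
      lt_of_mul_lt_mul_right h3 hβpos.le
    have hDlam : D lam < V + ε := by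
      simp only [hDdef]
      rw [hgsum]
      linarith
    exact le_trans (hminall lam hlamnn) hDlam.le
  have hVle : V ≤ D lam0 := csSup_le hSne (hub lam0 hlam0nn)
  constructor
  · exact ⟨lam0, hlam0nn, le_antisymm hVle hstrong⟩
  · rintro y ⟨lam, hlam, rfl⟩
    exact csSup_le hSne (hub lam hlam)
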